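/- Let F be a field with char F ≠ 2 and let n ∈ ℕ. If g₁, g₂ ∈ Sp_{2n}(F) satisfy g₁² = g₂² = 1 and there exists h ∈ GL_{2n}(F) with g₂ = h · g₁ · h⁻¹, then there exists s ∈ Sp_{2n}(F) with g₂ = s · g₁ · s⁻¹. In other words, two involutions in Sp_{2n}(F) which are conjugate in GL_{2n}(F) are already conjugate in Sp_{2n}(F). -/

import Mathlib

open Module LinearMap Submodule

universe u

variable {F : Type u} [Field F]

section Glue

variable {V W : Type u} [AddCommGroup V] [Module F V] [AddCommGroup W] [Module F W]

lemma glue_isometry (B : LinearMap.BilinForm F V) (C : LinearMap.BilinForm F W)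
    {P P' : Submodule F V} {Q Q' : Submodule F W}
    (hP : IsCompl P P') (hQ : IsCompl Q Q')
    (hQo : ∀ x ∈ Q, ∀ y ∈ Q', C x y = 0) (hQo' : ∀ x ∈ Q', ∀ y ∈ Q, C x y = 0)
    (hBo : ∀ x ∈ P, ∀ y ∈ P', B x y = 0) (hBo' : ∀ x ∈ P', ∀ y ∈ P, B x y = 0)
    (φ₁ : P ≃ₗ[F] Q) (φ₂ : P' ≃ₗ[F] Q')
    (hφ₁ : ∀ x y : P, C (φ₁ x) (φ₁ y) = B x y)
    (hφ₂ : ∀ x y : P', C (φ₂ x) (φ₂ y) = B x y) :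
    ∃ φ : V ≃ₗ[F] W, (∀ x y, C (φ x) (φ y) = B x y) ∧
      (∀ x : P, φ x = φ₁ x) ∧ (∀ x : P', φ x = φ₂ x) := by
  set φ : V ≃ₗ[F] W := (Submodule.prodEquivOfIsCompl P P' hP).symm.trans
    ((φ₁.prodCongr φ₂).trans (Submodule.prodEquivOfIsCompl Q Q' hQ)) with hφdef
  have happ : ∀ a : P × P', φ (↑a.1 + ↑a.2) = ↑(φ₁ a.1) + ↑(φ₂ a.2) := by
    intro a
    have h1 : (Submodule.prodEquivOfIsCompl P P' hP) a = ↑a.1 + ↑a.2 :=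
      Submodule.coe_prodEquivOfIsCompl' P P' hP a
    have : φ ((Submodule.prodEquivOfIsCompl P P' hP) a) = ↑(φ₁ a.1) + ↑(φ₂ a.2) := by
      simp [hφdef, LinearEquiv.trans_apply, Submodule.coe_prodEquivOfIsCompl']
    rwa [h1] at this
  have hleft : ∀ x : P, φ x = φ₁ x := by
    intro x
    have := happ (x, 0)
    simpa using this
  have hright : ∀ x : P', φ x = φ₂ x := by
    intro x
    have := happ (0, x)
    simpa using this
  refine ⟨φ, ?_, hleft, hright⟩
  intro x y
  obtain ⟨a, rfl⟩ := (Submodule.prodEquivOfIsCompl P P' hP).surjective x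
  obtain ⟨b, rfl⟩ := (Submodule.prodEquivOfIsCompl P P' hP).surjective y
  rw [Submodule.coe_prodEquivOfIsCompl' P P' hP a, Submodule.coe_prodEquivOfIsCompl' P P' hP b,
    happ a, happ b]
  simp only [map_add, LinearMap.add_apply]
  rw [hφ₁ a.1 b.1, hφ₂ a.2 b.2,
    hQo _ (φ₁ a.1).2 _ (φ₂ b.2).2, hQo' _ (φ₂ a.2).2 _ (φ₁ b.1).2,
    hBo _ a.1.2 _ b.2.2, hBo' _ a.2.2 _ b.1.2]

end Glue

section Hyperbolic

variable {V W : Type u} [AddCommGroup V] [Module F V] [AddCommGroup W] [Module F W]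

lemma hyperbolic_equiv (B : LinearMap.BilinForm F V) (C : LinearMap.BilinForm F W)
    (hB : B.IsAlt) (hC : C.IsAlt) {v w : V} {v' w' : W}
    (hvw : B v w = 1) (hv'w' : C v' w' = 1) :
    ∃ φ : (Submodule.span F {v, w}) ≃ₗ[F] (Submodule.span F {v', w'}),
      ∀ x y, C (φ x) (φ y) = B x y := by
  have hwv : B w v = -1 := by rw [← hB.neg_eq, hvw]
  have hw'v' : C w' v' = -1 := by rw [← hC.neg_eq, hv'w']
  set T : V →ₗ[F] W := ((B.flip) w).smulRight v' - ((B.flip) v).smulRight w' with hTdef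
  set S : W →ₗ[F] V := ((C.flip) w').smulRight v - ((C.flip) v').smulRight w with hSdef
  have hT : ∀ a b : F, T (a • v + b • w) = a • v' + b • w' := by
    intro a b
    simp [hTdef, map_add, map_smul, LinearMap.sub_apply, LinearMap.smulRight_apply,
      LinearMap.flip_apply, hvw, hwv, hB.self_eq_zero, smul_smul, add_smul, smul_add]
  have hS : ∀ a b : F, S (a • v' + b • w') = a • v + b • w := by
    intro a b
    simp [hSdef, map_add, map_smul, LinearMap.sub_apply, LinearMap.smulRight_apply,
      LinearMap.flip_apply, hv'w', hw'v', hC.self_eq_zero, smul_smul, add_smul, smul_add]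
  have hTmem : ∀ x ∈ Submodule.span F {v, w}, T x ∈ Submodule.span F {v', w'} := by
    intro x hx
    obtain ⟨a, b, rfl⟩ := Submodule.mem_span_pair.1 hx
    rw [hT]
    exact Submodule.mem_span_pair.2 ⟨a, b, rfl⟩
  have hSmem : ∀ x ∈ Submodule.span F {v', w'}, S x ∈ Submodule.span F {v, w} := by
    intro x hx
    obtain ⟨a, b, rfl⟩ := Submodule.mem_span_pair.1 hx
    rw [hS]
    exact Submodule.mem_span_pair.2 ⟨a, b, rfl⟩
  have hST : (T.restrict hTmem) ∘ₗ (S.restrict hSmem) = LinearMap.id := by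
    ext ⟨x, hx⟩
    obtain ⟨a, b, rfl⟩ := Submodule.mem_span_pair.1 hx
    simp only [LinearMap.coe_comp, Function.comp_apply, LinearMap.id_coe, id_eq]
    rw [LinearMap.restrict_coe_apply, LinearMap.restrict_coe_apply, hS, hT]
  have hTS : (S.restrict hSmem) ∘ₗ (T.restrict hTmem) = LinearMap.id := by
    ext ⟨x, hx⟩
    obtain ⟨a, b, rfl⟩ := Submodule.mem_span_pair.1 hx
    simp only [LinearMap.coe_comp, Function.comp_apply, LinearMap.id_coe, id_eq]
    rw [LinearMap.restrict_coe_apply, LinearMap.restrict_coe_apply, hT, hS]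
  refine ⟨LinearEquiv.ofLinear (T.restrict hTmem) (S.restrict hSmem) hST hTS, ?_⟩
  rintro ⟨x, hx⟩ ⟨y, hy⟩
  obtain ⟨a, b, rfl⟩ := Submodule.mem_span_pair.1 hx
  obtain ⟨c, d, rfl⟩ := Submodule.mem_span_pair.1 hy
  simp only [LinearEquiv.ofLinear_apply]
  rw [LinearMap.restrict_coe_apply, LinearMap.restrict_coe_apply, hT, hT]
  simp only [map_add, map_smul, LinearMap.add_apply, LinearMap.smul_apply, smul_eq_mul,
    hvw, hwv, hv'w', hw'v', hB.self_eq_zero, hC.self_eq_zero]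

end Hyperbolic

section Darboux

variable {V : Type u} [AddCommGroup V] [Module F V]

lemma exists_hyperbolic_pair (B : LinearMap.BilinForm F V) (hBnd : B.Nondegenerate)
    [Nontrivial V] : ∃ v w : V, B v w = 1 := by
  obtain ⟨v, hv⟩ := exists_ne (0 : V)
  have : ¬ ∀ y, B v y = 0 := fun hall => hv (hBnd.1 v hall)
  push_neg at this
  obtain ⟨w₀, hw₀⟩ := this
  exact ⟨v, (B v w₀)⁻¹ • w₀, by rw [map_smul, smul_eq_mul, inv_mul_cancel₀ hw₀]⟩

lemma darboux_equiv : ∀ (k : ℕ) (V W : Type u) [AddCommGroup V] [Module F V]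
    [AddCommGroup W] [Module F W] [FiniteDimensional F V] [FiniteDimensional F W]
    (B : LinearMap.BilinForm F V) (C : LinearMap.BilinForm F W),
    B.IsAlt → C.IsAlt → B.Nondegenerate → C.Nondegenerate →
    finrank F V = k → finrank F W = k →
    ∃ φ : V ≃ₗ[F] W, ∀ x y, C (φ x) (φ y) = B x y := by
  intro k
  induction k using Nat.strong_induction_on with
  | _ k IH =>
  intro V W _ _ _ _ _ _ B C hBalt hCalt hBnd hCnd hV hW
  rcases Nat.eq_zero_or_pos k with hk | hk
  · subst hk
    have h1 : Subsingleton V := Module.finrank_zero_iff.1 hV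
    refine ⟨LinearEquiv.ofFinrankEq V W (hV.trans hW.symm), fun x y => ?_⟩
    rw [Subsingleton.elim x 0, Subsingleton.elim y 0]
    simp
  · have hVnt : Nontrivial V := Module.finrank_pos_iff.1 (hV ▸ hk)
    have hWnt : Nontrivial W := Module.finrank_pos_iff.1 (hW ▸ hk)
    obtain ⟨v, w, hvw⟩ := exists_hyperbolic_pair B hBnd
    obtain ⟨v', w', hv'w'⟩ := exists_hyperbolic_pair C hCnd
    set P : Submodule F V := Submodule.span F {v, w} with hPdef
    set Q : Submodule F W := Submodule.span F {v', w'} with hQdef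
    have hwv : B w v = -1 := by rw [← hBalt.neg_eq, hvw]
    have hw'v' : C w' v' = -1 := by rw [← hCalt.neg_eq, hv'w']
    have hvP : v ∈ P := Submodule.mem_span_pair.2 ⟨1, 0, by simp⟩
    have hwP : w ∈ P := Submodule.mem_span_pair.2 ⟨0, 1, by simp⟩
    have hv'Q : v' ∈ Q := Submodule.mem_span_pair.2 ⟨1, 0, by simp⟩
    have hw'Q : w' ∈ Q := Submodule.mem_span_pair.2 ⟨0, 1, by simp⟩
    -- finrank of the planes
    have hfinP : finrank F P = 2 := by
      have hli : LinearIndependent F ![v, w] := by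
        refine LinearIndependent.pair_iff.2 fun s t hst => ?_
        have h1 := congrArg (fun z => B z w) hst
        have h2 := congrArg (fun z => B z v) hst
        simp only [map_add, map_smul, LinearMap.add_apply, LinearMap.smul_apply, smul_eq_mul,
          hvw, hwv, hBalt.self_eq_zero, map_zero, LinearMap.zero_apply] at h1 h2
        constructor
        · simpa using h1
        · simpa using h2
      have hrange : Set.range ![v, w] = {v, w} := by
        ext z
        simp [Fin.exists_fin_two, or_comm]
      have := finrank_span_eq_card (R := F) hli
      rw [hrange] at this
      simpa [hPdef] using this
    have hfinQ : finrank F Q = 2 := by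
      have hli : LinearIndependent F ![v', w'] := by
        refine LinearIndependent.pair_iff.2 fun s t hst => ?_
        have h1 := congrArg (fun z => C z w') hst
        have h2 := congrArg (fun z => C z v') hst
        simp only [map_add, map_smul, LinearMap.add_apply, LinearMap.smul_apply, smul_eq_mul,
          hv'w', hw'v', hCalt.self_eq_zero, map_zero, LinearMap.zero_apply] at h1 h2
        constructor
        · simpa using h1
        · simpa using h2
      have hrange : Set.range ![v', w'] = {v', w'} := by
        ext z
        simp [Fin.exists_fin_two, or_comm]
      have := finrank_span_eq_card (R := F) hli
      rw [hrange] at this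
      simpa [hQdef] using this
    -- restricted nondegeneracy on the planes
    have hPnd : (B.restrict P).Nondegenerate := by
      refine LinearMap.BilinForm.Nondegenerate.ofSeparatingLeft ?_
      rintro ⟨x, hx⟩ hxall
      obtain ⟨a, b, rfl⟩ := Submodule.mem_span_pair.1 hx
      have h1 := hxall ⟨w, hwP⟩
      have h2 := hxall ⟨v, hvP⟩
      simp [hvw, hwv, hBalt.self_eq_zero] at h1 h2
      apply Subtype.ext
      show a • v + b • w = (0 : V)
      rw [h1, h2]; simp
    have hQnd : (C.restrict Q).Nondegenerate := by
      refine LinearMap.BilinForm.Nondegenerate.ofSeparatingLeft ?_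
      rintro ⟨x, hx⟩ hxall
      obtain ⟨a, b, rfl⟩ := Submodule.mem_span_pair.1 hx
      have h1 := hxall ⟨w', hw'Q⟩
      have h2 := hxall ⟨v', hv'Q⟩
      simp [hv'w', hw'v', hCalt.self_eq_zero] at h1 h2
      apply Subtype.ext
      show a • v' + b • w' = (0 : W)
      rw [h1, h2]; simp
    -- orthogonal complements
    set P' : Submodule F V := B.orthogonal P with hP'def
    set Q' : Submodule F W := C.orthogonal Q with hQ'def
    have hPcompl : IsCompl P P' :=
      LinearMap.BilinForm.isCompl_orthogonal_of_restrict_nondegenerate hBalt.isRefl hPnd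
    have hQcompl : IsCompl Q Q' :=
      LinearMap.BilinForm.isCompl_orthogonal_of_restrict_nondegenerate hCalt.isRefl hQnd
    have hBo : ∀ x ∈ P, ∀ y ∈ P', B x y = 0 := fun x hx y hy => hy x hx
    have hBo' : ∀ x ∈ P', ∀ y ∈ P, B x y = 0 := fun x hx y hy => hBalt.isRefl _ _ (hx y hy)
    have hCo : ∀ x ∈ Q, ∀ y ∈ Q', C x y = 0 := fun x hx y hy => hy x hx
    have hCo' : ∀ x ∈ Q', ∀ y ∈ Q, C x y = 0 := fun x hx y hy => hCalt.isRefl _ _ (hx y hy)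
    have hP'nd : (B.restrict P').Nondegenerate := by
      apply B.nondegenerate_restrict_of_disjoint_orthogonal hBalt.isRefl
      rw [hP'def, LinearMap.BilinForm.orthogonal_orthogonal hBnd hBalt.isRefl]
      exact hPcompl.disjoint.symm
    have hQ'nd : (C.restrict Q').Nondegenerate := by
      apply C.nondegenerate_restrict_of_disjoint_orthogonal hCalt.isRefl
      rw [hQ'def, LinearMap.BilinForm.orthogonal_orthogonal hCnd hCalt.isRefl]
      exact hQcompl.disjoint.symm
    have hfinP' : finrank F P' = k - 2 := by
      rw [hP'def, LinearMap.BilinForm.finrank_orthogonal hBnd, hV, hfinP]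
    have hfinQ' : finrank F Q' = k - 2 := by
      rw [hQ'def, LinearMap.BilinForm.finrank_orthogonal hCnd, hW, hfinQ]
    have hk2 : 2 ≤ k := by
      have := Submodule.finrank_le P
      omega
    obtain ⟨ψ, hψ⟩ := IH (k - 2) (by omega) P' Q' (B.restrict P') (C.restrict Q')
      (fun x => hBalt x) (fun x => hCalt x) hP'nd hQ'nd hfinP' hfinQ'
    obtain ⟨φ₁, hφ₁⟩ := hyperbolic_equiv B C hBalt hCalt hvw hv'w'
    obtain ⟨φ, hiso, -, -⟩ := glue_isometry B C hPcompl hQcompl hCo hCo' hBo hBo' φ₁ ψ hφ₁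
      (fun x y => by simpa [LinearMap.BilinForm.restrict_apply] using hψ x y)
    exact ⟨φ, hiso⟩

end Darboux

section Involution

variable {V : Type u} [AddCommGroup V] [Module F V]

lemma invol_mem_plus {g : V →ₗ[F] V} {x : V} :
    x ∈ LinearMap.ker (g - LinearMap.id) ↔ g x = x := by
  rw [LinearMap.mem_ker, LinearMap.sub_apply, LinearMap.id_apply, sub_eq_zero]

lemma invol_mem_minus {g : V →ₗ[F] V} {x : V} :
    x ∈ LinearMap.ker (g + LinearMap.id) ↔ g x = -x := by
  rw [LinearMap.mem_ker, LinearMap.add_apply, LinearMap.id_apply, add_eq_zero_iff_eq_neg]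

lemma invol_decomp (htwo : (2 : F) ≠ 0) (B : LinearMap.BilinForm F V)
    (hBnd : B.Nondegenerate) (g : V →ₗ[F] V)
    (hg : ∀ x, g (g x) = x) (hiso : ∀ x y, B (g x) (g y) = B x y) :
    IsCompl (LinearMap.ker (g - LinearMap.id)) (LinearMap.ker (g + LinearMap.id)) ∧
    (∀ x ∈ LinearMap.ker (g - LinearMap.id), ∀ y ∈ LinearMap.ker (g + LinearMap.id),
      B x y = 0) ∧
    (∀ x ∈ LinearMap.ker (g + LinearMap.id), ∀ y ∈ LinearMap.ker (g - LinearMap.id),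
      B x y = 0) ∧
    (B.restrict (LinearMap.ker (g - LinearMap.id))).Nondegenerate ∧
    (B.restrict (LinearMap.ker (g + LinearMap.id))).Nondegenerate := by
  set Vp := LinearMap.ker (g - LinearMap.id) with hVp
  set Vm := LinearMap.ker (g + LinearMap.id) with hVm
  have horth : ∀ x ∈ Vp, ∀ y ∈ Vm, B x y = 0 := by
    intro x hx y hy
    have h := hiso x y
    rw [invol_mem_plus.1 hx, invol_mem_minus.1 hy, map_neg] at h
    -- h : -(B x y) = B x y
    have h2 : (2 : F) * B x y = 0 := by linear_combination -h
    rcases mul_eq_zero.1 h2 with h3 | h3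
    · exact absurd h3 htwo
    · exact h3
  have horth' : ∀ x ∈ Vm, ∀ y ∈ Vp, B x y = 0 := by
    intro x hx y hy
    have h := hiso x y
    rw [invol_mem_minus.1 hx, invol_mem_plus.1 hy, map_neg, LinearMap.neg_apply] at h
    have h2 : (2 : F) * B x y = 0 := by linear_combination -h
    rcases mul_eq_zero.1 h2 with h3 | h3
    · exact absurd h3 htwo
    · exact h3
  have hcompl : IsCompl Vp Vm := by
    constructor
    · rw [disjoint_iff]
      ext x
      simp only [Submodule.mem_inf, Submodule.mem_bot]
      constructor
      · rintro ⟨hp, hm⟩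
        have h1 := invol_mem_plus.1 hp
        have h2 := invol_mem_minus.1 hm
        have : x = -x := h1.symm.trans h2
        have h3 : (2 : F) • x = 0 := by
          rw [two_smul]
          nth_rewrite 2 [this]
          simp
        rcases smul_eq_zero.1 h3 with h4 | h4
        · exact absurd h4 htwo
        · exact h4
      · rintro rfl
        exact ⟨Submodule.zero_mem _, Submodule.zero_mem _⟩
    · rw [codisjoint_iff, eq_top_iff]
      intro x _
      have hp : (2⁻¹ : F) • (x + g x) ∈ Vp := by
        rw [hVp]
        apply invol_mem_plus.2
        rw [map_smul, map_add, hg]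
        rw [add_comm]
      have hm : (2⁻¹ : F) • (x - g x) ∈ Vm := by
        rw [hVm]
        apply invol_mem_minus.2
        rw [map_smul, map_sub, hg, ← smul_neg]
        congr 1
        abel
      have hx : (2⁻¹ : F) • (x + g x) + (2⁻¹ : F) • (x - g x) = x := by
        rw [← smul_add]
        have : (x + g x) + (x - g x) = (2 : F) • x := by
          rw [two_smul]; abel
        rw [this, smul_smul, inv_mul_cancel₀ htwo, one_smul]
      exact Submodule.mem_sup.2 ⟨_, hp, _, hm, hx⟩
  refine ⟨hcompl, horth, horth', ?_, ?_⟩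
  · refine ⟨?_, ?_⟩
    · rintro ⟨x, hx⟩ hall
      rw [Submodule.mk_eq_zero]
      apply hBnd.1 x
      intro z
      obtain ⟨⟨a, b⟩, rfl⟩ := (Submodule.prodEquivOfIsCompl _ _ hcompl).surjective z
      rw [Submodule.coe_prodEquivOfIsCompl', map_add]
      have h1 : B x ↑a = 0 := hall a
      have h2 : B x ↑b = 0 := horth x hx ↑b b.2
      rw [h1, h2, add_zero]
    · rintro ⟨x, hx⟩ hall
      rw [Submodule.mk_eq_zero]
      apply hBnd.2 x
      intro z
      obtain ⟨⟨a, b⟩, rfl⟩ := (Submodule.prodEquivOfIsCompl _ _ hcompl).surjective z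
      rw [Submodule.coe_prodEquivOfIsCompl', map_add, LinearMap.add_apply]
      have h1 : B ↑a x = 0 := hall a
      have h2 : B ↑b x = 0 := horth' ↑b b.2 x hx
      rw [h1, h2, add_zero]
  · refine ⟨?_, ?_⟩
    · rintro ⟨x, hx⟩ hall
      rw [Submodule.mk_eq_zero]
      apply hBnd.1 x
      intro z
      obtain ⟨⟨a, b⟩, rfl⟩ := (Submodule.prodEquivOfIsCompl _ _ hcompl).surjective z
      rw [Submodule.coe_prodEquivOfIsCompl', map_add]
      have h1 : B x ↑b = 0 := hall b
      have h2 : B x ↑a = 0 := horth' x hx ↑a a.2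
      rw [h1, h2, add_zero]
    · rintro ⟨x, hx⟩ hall
      rw [Submodule.mk_eq_zero]
      apply hBnd.2 x
      intro z
      obtain ⟨⟨a, b⟩, rfl⟩ := (Submodule.prodEquivOfIsCompl _ _ hcompl).surjective z
      rw [Submodule.coe_prodEquivOfIsCompl', map_add, LinearMap.add_apply]
      have h1 : B ↑b x = 0 := hall b
      have h2 : B ↑a x = 0 := horth ↑a a.2 x hx
      rw [h1, h2, zero_add]

end Involution

section Main

open Matrix

set_option maxHeartbeats 2000000 in
theorem involutions_GL_conjugate_imp_Sp_conjugate'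
    (F : Type*) [Field F] (hchar : ringChar F ≠ 2) (n : ℕ)
    (g₁ g₂ : Matrix (Fin n ⊕ Fin n) (Fin n ⊕ Fin n) F)
    (hg₁ : g₁ ∈ Matrix.symplecticGroup (Fin n) F)
    (hg₂ : g₂ ∈ Matrix.symplecticGroup (Fin n) F)
    (h₁ : g₁ ^ 2 = 1) (h₂ : g₂ ^ 2 = 1)
    (h : Matrix (Fin n ⊕ Fin n) (Fin n ⊕ Fin n) F) (hh : IsUnit h)
    (hconj : g₂ = h * g₁ * h⁻¹) :
    ∃ s ∈ Matrix.symplecticGroup (Fin n) F, g₂ = s * g₁ * s⁻¹ := by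
  classical
  have htwo : (2 : F) ≠ 0 := Ring.two_ne_zero hchar
  set Jm : Matrix (Fin n ⊕ Fin n) (Fin n ⊕ Fin n) F := Matrix.J (Fin n) F with hJm
  set B : LinearMap.BilinForm F ((Fin n ⊕ Fin n) → F) := Matrix.toBilin' Jm with hBdef
  -- bridge
  have hbridge : ∀ (A : Matrix (Fin n ⊕ Fin n) (Fin n ⊕ Fin n) F) x y,
      B (A *ᵥ x) (A *ᵥ y) = Matrix.toBilin' (Aᵀ * Jm * A) x y := by
    intro A x y
    have hAx : A *ᵥ x = x ᵥ* Aᵀ := by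
      have := Matrix.mulVec_transpose Aᵀ x
      rwa [Matrix.transpose_transpose] at this
    rw [hBdef, Matrix.toBilin'_apply', Matrix.toBilin'_apply', Matrix.mulVec_mulVec,
      Matrix.dotProduct_mulVec, Matrix.dotProduct_mulVec, hAx, Matrix.vecMul_vecMul,
      Matrix.mul_assoc]
  -- nondegeneracy and alternation of B
  have hdetJ : (Jm).det ≠ 0 := (Matrix.isUnit_det_J (Fin n) F).ne_zero
  have hBnd : B.Nondegenerate :=
    Matrix.nondegenerate_toBilin'_iff.2 (Matrix.nondegenerate_of_det_ne_zero hdetJ)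
  have hBalt : B.IsAlt := by
    intro x
    have hc : B x x = - B x x := by
      rw [hBdef, Matrix.toBilin'_apply']
      nth_rewrite 1 [Matrix.dotProduct_mulVec, ← Matrix.mulVec_transpose,
        Matrix.J_transpose, Matrix.neg_mulVec, neg_dotProduct,
        dotProduct_comm]
      rfl
    have h2 : (2 : F) * B x x = 0 := by linear_combination hc
    rcases mul_eq_zero.1 h2 with h3 | h3
    · exact absurd h3 htwo
    · exact h3
  -- isometry and involution properties of g₁ g₂
  have hiso : ∀ (g : Matrix (Fin n ⊕ Fin n) (Fin n ⊕ Fin n) F),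
      g ∈ Matrix.symplecticGroup (Fin n) F →
      ∀ x y, B (Matrix.toLin' g x) (Matrix.toLin' g y) = B x y := by
    intro g hg x y
    rw [Matrix.toLin'_apply, Matrix.toLin'_apply, hbridge,
      (SymplecticGroup.mem_iff' (R := F)).1 hg]
  have hinv : ∀ (g : Matrix (Fin n ⊕ Fin n) (Fin n ⊕ Fin n) F), g ^ 2 = 1 →
      ∀ x, Matrix.toLin' g (Matrix.toLin' g x) = x := by
    intro g hgsq x
    rw [Matrix.toLin'_apply, Matrix.toLin'_apply, Matrix.mulVec_mulVec, ← pow_two, hgsq,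
      Matrix.one_mulVec]
  obtain ⟨hcompl₁, ho₁, ho₁', hnd₁p, hnd₁m⟩ :=
    invol_decomp htwo B hBnd (Matrix.toLin' g₁) (hinv g₁ h₁) (hiso g₁ hg₁)
  obtain ⟨hcompl₂, ho₂, ho₂', hnd₂p, hnd₂m⟩ :=
    invol_decomp htwo B hBnd (Matrix.toLin' g₂) (hinv g₂ h₂) (hiso g₂ hg₂)
  -- the conjugating matrix gives equality of eigenspace dimensions
  have hdeth : IsUnit h.det := (Matrix.isUnit_iff_isUnit_det h).1 hh
  have hhinv : h * h⁻¹ = 1 := Matrix.mul_nonsing_inv h hdeth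
  have hinvh : h⁻¹ * h = 1 := Matrix.nonsing_inv_mul h hdeth
  have hE1 : Matrix.toLin' h ∘ₗ Matrix.toLin' h⁻¹ = LinearMap.id := by
    rw [← Matrix.toLin'_mul, hhinv, Matrix.toLin'_one]
  have hE2 : Matrix.toLin' h⁻¹ ∘ₗ Matrix.toLin' h = LinearMap.id := by
    rw [← Matrix.toLin'_mul, hinvh, Matrix.toLin'_one]
  set e : ((Fin n ⊕ Fin n) → F) ≃ₗ[F] ((Fin n ⊕ Fin n) → F) :=
    LinearEquiv.ofLinear (Matrix.toLin' h) (Matrix.toLin' h⁻¹) hE1 hE2 with hedef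
  have hinj : ∀ z : (Fin n ⊕ Fin n) → F, h *ᵥ z = 0 → z = 0 := by
    intro z hz
    have := congrArg (fun w => h⁻¹ *ᵥ w) hz
    simpa [Matrix.mulVec_mulVec, hinvh, Matrix.one_mulVec, Matrix.mulVec_zero] using this
  have hker : ∀ c₁ c₂ : Matrix (Fin n ⊕ Fin n) (Fin n ⊕ Fin n) F, c₂ = h * c₁ * h⁻¹ →
      finrank F (LinearMap.ker (Matrix.toLin' c₂)) =
      finrank F (LinearMap.ker (Matrix.toLin' c₁)) := by
    intro c₁ c₂ hc
    have hc₂ : ∀ y, c₂ *ᵥ y = h *ᵥ (c₁ *ᵥ (h⁻¹ *ᵥ y)) := by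
      intro y
      rw [hc, ← Matrix.mulVec_mulVec, ← Matrix.mulVec_mulVec]
    have hmap : LinearMap.ker (Matrix.toLin' c₂) =
        Submodule.map (e : ((Fin n ⊕ Fin n) → F) →ₗ[F] ((Fin n ⊕ Fin n) → F))
          (LinearMap.ker (Matrix.toLin' c₁)) := by
      ext y
      rw [Submodule.mem_map, LinearMap.mem_ker, Matrix.toLin'_apply]
      constructor
      · intro hy
        refine ⟨h⁻¹ *ᵥ y, ?_, ?_⟩
        · rw [LinearMap.mem_ker, Matrix.toLin'_apply]
          apply hinj
          rw [← hc₂, hy]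
        · show h *ᵥ (h⁻¹ *ᵥ y) = y
          rw [Matrix.mulVec_mulVec, hhinv, Matrix.one_mulVec]
      · rintro ⟨x, hx, rfl⟩
        rw [LinearMap.mem_ker, Matrix.toLin'_apply] at hx
        show c₂ *ᵥ (h *ᵥ x) = 0
        have hcanc : h⁻¹ *ᵥ (h *ᵥ x) = x := by
          rw [Matrix.mulVec_mulVec, hinvh, Matrix.one_mulVec]
        rw [hc₂, hcanc, hx, Matrix.mulVec_zero]
    rw [hmap]
    exact LinearEquiv.finrank_map_eq e _
  have hrel_p : g₂ - 1 = h * (g₁ - 1) * h⁻¹ := by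
    rw [hconj, Matrix.mul_sub, Matrix.mul_one, Matrix.sub_mul, hhinv]
  have hrel_m : g₂ + 1 = h * (g₁ + 1) * h⁻¹ := by
    rw [hconj, Matrix.mul_add, Matrix.mul_one, Matrix.add_mul, hhinv]
  have htl_sub : ∀ g : Matrix (Fin n ⊕ Fin n) (Fin n ⊕ Fin n) F,
      Matrix.toLin' (g - 1) = Matrix.toLin' g - LinearMap.id := by
    intro g
    apply LinearMap.ext
    intro x
    rw [Matrix.toLin'_apply, LinearMap.sub_apply, Matrix.toLin'_apply, LinearMap.id_apply,
      Matrix.sub_mulVec, Matrix.one_mulVec]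
  have htl_add : ∀ g : Matrix (Fin n ⊕ Fin n) (Fin n ⊕ Fin n) F,
      Matrix.toLin' (g + 1) = Matrix.toLin' g + LinearMap.id := by
    intro g
    apply LinearMap.ext
    intro x
    rw [Matrix.toLin'_apply, LinearMap.add_apply, Matrix.toLin'_apply, LinearMap.id_apply,
      Matrix.add_mulVec, Matrix.one_mulVec]
  have hfp : finrank F (LinearMap.ker (Matrix.toLin' g₁ - LinearMap.id)) =
      finrank F (LinearMap.ker (Matrix.toLin' g₂ - LinearMap.id)) := by
    have := hker (g₁ - 1) (g₂ - 1) hrel_p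
    rw [htl_sub, htl_sub] at this
    exact this.symm
  have hfm : finrank F (LinearMap.ker (Matrix.toLin' g₁ + LinearMap.id)) =
      finrank F (LinearMap.ker (Matrix.toLin' g₂ + LinearMap.id)) := by
    have := hker (g₁ + 1) (g₂ + 1) hrel_m
    rw [htl_add, htl_add] at this
    exact this.symm
  -- isometries between corresponding eigenspaces
  obtain ⟨ψp, hψp⟩ := darboux_equiv (finrank F (LinearMap.ker (Matrix.toLin' g₁ - LinearMap.id)))
    (LinearMap.ker (Matrix.toLin' g₁ - LinearMap.id))
    (LinearMap.ker (Matrix.toLin' g₂ - LinearMap.id))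
    (B.restrict _) (B.restrict _) (fun x => hBalt x) (fun x => hBalt x)
    hnd₁p hnd₂p rfl hfp.symm
  obtain ⟨ψm, hψm⟩ := darboux_equiv (finrank F (LinearMap.ker (Matrix.toLin' g₁ + LinearMap.id)))
    (LinearMap.ker (Matrix.toLin' g₁ + LinearMap.id))
    (LinearMap.ker (Matrix.toLin' g₂ + LinearMap.id))
    (B.restrict _) (B.restrict _) (fun x => hBalt x) (fun x => hBalt x)
    hnd₁m hnd₂m rfl hfm.symm
  obtain ⟨φ, hisoφ, hresp, hresm⟩ := glue_isometry B B hcompl₁ hcompl₂ ho₂ ho₂' ho₁ ho₁'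
    ψp ψm (fun x y => hψp x y) (fun x y => hψm x y)
  -- φ intertwines g₁ and g₂
  have hint : ∀ x, φ (Matrix.toLin' g₁ x) = Matrix.toLin' g₂ (φ x) := by
    intro x
    obtain ⟨⟨a, b⟩, rfl⟩ := (Submodule.prodEquivOfIsCompl _ _ hcompl₁).surjective x
    rw [Submodule.coe_prodEquivOfIsCompl']
    have hga : Matrix.toLin' g₁ ↑a = ↑a := invol_mem_plus.1 a.2
    have hgb : Matrix.toLin' g₁ ↑b = -↑b := invol_mem_minus.1 b.2
    have hga' : Matrix.toLin' g₂ ↑(ψp a) = ↑(ψp a) := invol_mem_plus.1 (ψp a).2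
    have hgb' : Matrix.toLin' g₂ ↑(ψm b) = -↑(ψm b) := invol_mem_minus.1 (ψm b).2
    rw [map_add, map_add, hga, hgb, map_add, hresp a, hresm b, map_add, hga', hgb']
    rw [show φ (-↑b) = -φ ↑b by rw [map_neg], hresm b]
  -- turn φ into a symplectic matrix
  set s : Matrix (Fin n ⊕ Fin n) (Fin n ⊕ Fin n) F := LinearMap.toMatrix' (φ : _ →ₗ[F] _)
    with hsdef
  have hsvec : ∀ x, s *ᵥ x = φ x := by
    intro x
    rw [← Matrix.toLin'_apply, hsdef, Matrix.toLin'_toMatrix']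
    rfl
  have hs : s ∈ Matrix.symplecticGroup (Fin n) F := by
    rw [SymplecticGroup.mem_iff']
    have : Matrix.toBilin' (sᵀ * Jm * s) = Matrix.toBilin' Jm := by
      apply LinearMap.ext
      intro x
      apply LinearMap.ext
      intro y
      rw [← hbridge, hsvec, hsvec]
      exact hisoφ x y
    exact Matrix.toBilin'.injective this
  have hsg : s * g₁ = g₂ * s := by
    apply Matrix.toLin'.injective
    apply LinearMap.ext
    intro x
    rw [Matrix.toLin'_apply, Matrix.toLin'_apply, ← Matrix.mulVec_mulVec,
      ← Matrix.mulVec_mulVec, hsvec]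
    have := hint x
    rw [Matrix.toLin'_apply, Matrix.toLin'_apply] at this
    rw [this, hsvec]
  have hdets : IsUnit s.det := SymplecticGroup.symplectic_det hs
  refine ⟨s, hs, ?_⟩
  have : s * g₁ * s⁻¹ = g₂ * s * s⁻¹ := by rw [hsg]
  rw [Matrix.mul_assoc g₂ s s⁻¹, Matrix.mul_nonsing_inv s hdets, Matrix.mul_one] at this
  exact this.symm

end Main


/-- Two involutions in `Sp_{2n}(F)` which are conjugate in `GL_{2n}(F)` are already
conjugate by an element of `Sp_{2n}(F)`. -/
theorem involutions_GL_conjugate_imp_Sp_conjugate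
    (F : Type*) [Field F] (hchar : ringChar F ≠ 2) (n : ℕ)
    (g₁ g₂ : Matrix (Fin n ⊕ Fin n) (Fin n ⊕ Fin n) F)
    (hg₁ : g₁ ∈ Matrix.symplecticGroup (Fin n) F)
    (hg₂ : g₂ ∈ Matrix.symplecticGroup (Fin n) F)
    (h₁ : g₁ ^ 2 = 1) (h₂ : g₂ ^ 2 = 1)
    (h : Matrix (Fin n ⊕ Fin n) (Fin n ⊕ Fin n) F) (hh : IsUnit h)
    (hconj : g₂ = h * g₁ * h⁻¹) :
    ∃ s ∈ Matrix.symplecticGroup (Fin n) F, g₂ = s * g₁ * s⁻¹ := by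
  exact involutions_GL_conjugate_imp_Sp_conjugate' F hchar n g₁ g₂ hg₁ hg₂ h₁ h₂ h hh hconj
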